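/- Let m, m', m~, m^ : ℕ → ℝ satisfy the Hosoya recurrence system with parameters a = 0, b = 0, c = 1 (the para-hexagonal cactus case). Then in ℝ[[X]] one has (1 − 12·X − 8·X²) · (∑_{n≥0} m(n)·Xⁿ) = 1 + 6·X; that is, the generating function of the number of matchings of para-hexagonal cacti is P(x) = (1 + 6x)/(1 − 12x − 8x²). -/

import Mathlib

/-- Generating function of the number of matchings of para-hexagonal cacti. -/
theorem hosoya_genfun_para
    (m m' mt mh : ℕ → ℝ)
    (hm0 : m 0 = 1) (hm1 : m 1 = 18)
    (hm'0 : m' 0 = 8) (hmt0 : mt 0 = 8) (hmh0 : mh 0 = 8)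
    (hm : ∀ n, 2 ≤ n →
      m n = 8 * m (n - 1) + 10 * (0 : ℝ) * m' (n - 2) + 10 * (0 : ℝ) * mt (n - 2)
        + 10 * (1 : ℝ) * mh (n - 2))
    (hm' : ∀ n, 1 ≤ n →
      m' n = 5 * m n + 3 * (0 : ℝ) * m' (n - 1) + 3 * (0 : ℝ) * mt (n - 1)
        + 3 * (1 : ℝ) * mh (n - 1))
    (hmt : ∀ n, 1 ≤ n →
      mt n = 3 * m n + 5 * (0 : ℝ) * m' (n - 1) + 5 * (0 : ℝ) * mt (n - 1)
        + 5 * (1 : ℝ) * mh (n - 1))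
    (hmh : ∀ n, 1 ≤ n →
      mh n = 4 * m n + 4 * (0 : ℝ) * m' (n - 1) + 4 * (0 : ℝ) * mt (n - 1)
        + 4 * (1 : ℝ) * mh (n - 1)) :
    (1 - (12 : PowerSeries ℝ) * PowerSeries.X - (8 : PowerSeries ℝ) * PowerSeries.X ^ 2) * PowerSeries.mk m
      = 1 + (6 : PowerSeries ℝ) * PowerSeries.X := by
  have hrec : ∀ n, m (n + 2) = 12 * m (n + 1) + 8 * m n := by
    intro n
    cases n with
    | zero =>
      have h2 := hm 2 (by norm_num)
      norm_num at h2
      rw [hm0, hm1, hmh0] at *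
      linarith
    | succ k =>
      have h1 := hm (k + 3) (by omega)
      have h2 := hm (k + 2) (by omega)
      have h3 := hmh (k + 1) (by omega)
      simp only [show k + 3 - 1 = k + 2 from rfl, show k + 3 - 2 = k + 1 from rfl,
        show k + 2 - 1 = k + 1 from rfl, show k + 2 - 2 = k from rfl,
        show k + 1 - 1 = k from rfl] at h1 h2 h3
      norm_num at h1 h2 h3
      linarith
  have h12 : (PowerSeries.C (R := ℝ)) 12 = (12 : PowerSeries ℝ) := by
    simp [map_ofNat]
  have h8 : (PowerSeries.C (R := ℝ)) 8 = (8 : PowerSeries ℝ) := by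
    simp [map_ofNat]
  have key : (1 - (12 : PowerSeries ℝ) * PowerSeries.X - (8 : PowerSeries ℝ) * PowerSeries.X ^ 2) * PowerSeries.mk m
      = PowerSeries.mk m - (PowerSeries.C (R := ℝ)) 12 * (PowerSeries.X * PowerSeries.mk m)
        - (PowerSeries.C (R := ℝ)) 8 * (PowerSeries.X ^ 2 * PowerSeries.mk m) := by
    rw [h12, h8]; ring
  rw [key]
  ext n
  have hx2 : ∀ k, (PowerSeries.coeff (R := ℝ) (k + 2)) (PowerSeries.X ^ 2 * PowerSeries.mk m)
      = m k := by
    intro k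
    simpa using PowerSeries.coeff_X_pow_mul (PowerSeries.mk m) 2 k
  rcases n with _ | _ | n
  · simp [hm0]
  · rw [show (1:ℕ) = 0 + 1 from rfl]
    simp only [map_sub, PowerSeries.coeff_C_mul, PowerSeries.coeff_succ_X_mul,
      PowerSeries.coeff_mk, map_add, map_mul]
    rw [PowerSeries.coeff_X_pow_mul']
    simp [hm1, hm0, show ((PowerSeries.constantCoeff (R := ℝ))) (6:PowerSeries ℝ) = 6 from by
      rw [show (6:PowerSeries ℝ) = PowerSeries.C (R := ℝ) 6 from by simp [map_ofNat]]; simp]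
    norm_num
  · simp only [map_sub, PowerSeries.coeff_C_mul, map_add]
    rw [show n + 2 = (n + 1) + 1 from rfl, PowerSeries.coeff_succ_X_mul,
      show (n + 1) + 1 = n + 2 from rfl, hx2]
    rw [show (6:PowerSeries ℝ) = PowerSeries.C (R := ℝ) 6 from by simp [map_ofNat]]
    simp [PowerSeries.coeff_one, PowerSeries.coeff_X, PowerSeries.coeff_C, hrec n]
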